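/- arXiv:2601.12958 — 2 statements merged into one kernel-verified Lean document; each statement's English description precedes it below -/
import Mathlib

section
/- Let G be a t.d.l.c. group. Then every compact subgroup K of G is contained in a compact open subgroup of G. -/
open Set Pointwise

section Aux

variable {G : Type*} [Group G] [TopologicalSpace G] [IsTopologicalGroup G]

/-- Version of `TopologicalGroup.exist_mul_closure_nhd` for a compact open set in a
not-necessarily-compact group. -/
lemma aux_exist_mul_closure_nhd {W : Set G} (hWc : IsCompact W) (hWo : IsOpen W) :
    ∃ T ∈ nhds (1 : G), W * T ⊆ W := by
  apply hWc.induction_on (p := fun S ↦ ∃ T ∈ nhds (1 : G), S * T ⊆ W)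
    ⟨Set.univ, by simp only [Filter.univ_mem, Set.empty_mul, Set.empty_subset, and_self]⟩
    (fun _ _ huv ⟨T, hT, mem⟩ ↦ ⟨T, hT, (Set.mul_subset_mul_right huv).trans mem⟩)
    (fun U V ⟨T₁, hT₁, mem1⟩ ⟨T₂, hT₂, mem2⟩ ↦ ⟨T₁ ∩ T₂, Filter.inter_mem hT₁ hT₂, by
      rw [Set.union_mul]
      exact Set.union_subset ((Set.mul_subset_mul_left Set.inter_subset_left).trans mem1)
        ((Set.mul_subset_mul_left Set.inter_subset_right).trans mem2)⟩)
  intro x memW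
  have : (x, 1) ∈ (fun p : G × G ↦ p.1 * p.2) ⁻¹' W := by simp [memW]
  rcases isOpen_prod_iff.mp (continuous_mul.isOpen_preimage W hWo) x 1 this with
    ⟨U, V, Uopen, Vopen, xmemU, onememV, prodsub⟩
  have h6 : U * V ⊆ W := Set.mul_subset_iff.mpr (fun _ hx _ hy ↦ prodsub (Set.mk_mem_prod hx hy))
  exact ⟨U ∩ W, ⟨U, Uopen.mem_nhds xmemU, W, fun _ a ↦ a, rfl⟩,
    V, Vopen.mem_nhds onememV, fun _ a ↦ h6 ((Set.mul_subset_mul_right Set.inter_subset_left) a)⟩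

/-- Van Dantzig ingredient: a compact open neighborhood of `1` contains a
compact open subgroup. -/
lemma aux_exists_compactOpen_subgroup_subset {W : Set G} (hWc : IsCompact W) (hWo : IsOpen W)
    (h1W : (1 : G) ∈ W) :
    ∃ U₀ : Subgroup G, IsCompact (U₀ : Set G) ∧ IsOpen (U₀ : Set G) ∧ (U₀ : Set G) ⊆ W := by
  obtain ⟨T, hTnhds, hTmul⟩ := aux_exist_mul_closure_nhd hWc hWo
  rcases mem_nhds_iff.mp hTnhds with ⟨T₀, hT₀T, hT₀o, h1T₀⟩
  set S : Set G := T₀ ∩ T₀⁻¹ with hS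
  have hSsymm : S⁻¹ = S := by simp [hS, Set.inter_comm]
  have hSnhds : S ∈ nhds (1 : G) := by
    apply Filter.inter_mem (hT₀o.mem_nhds h1T₀)
    simpa using hT₀o.inv.mem_nhds (by simpa using h1T₀)
  have hSsubT : S ⊆ T := fun x hx ↦ hT₀T hx.1
  refine ⟨Subgroup.closure S, ?_, ?_, ?_⟩
  case refine_2 =>
    exact Subgroup.isOpen_of_mem_nhds _ (Filter.mem_of_superset hSnhds Subgroup.subset_closure)
  case refine_3 =>
    intro g hg
    have hg' : g ∈ Submonoid.closure (S ∪ S⁻¹) := by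
      rw [← Subgroup.closure_toSubmonoid] at *
      exact hg
    rw [hSsymm, Set.union_self] at hg'
    have key : ∀ g ∈ Submonoid.closure S, ∀ w ∈ W, w * g ∈ W := by
      intro g hg
      induction hg using Submonoid.closure_induction with
      | mem x hx => exact fun w hw ↦ hTmul (Set.mul_mem_mul hw (hSsubT hx))
      | one => simpa
      | mul x y _ _ hx hy =>
        intro w hw
        rw [← mul_assoc]
        exact hy _ (hx w hw)
    simpa using key g hg' 1 h1W
  case refine_1 =>
    have hsub : (Subgroup.closure S : Set G) ⊆ W := by
      intro g hg
      have hg' : g ∈ Submonoid.closure (S ∪ S⁻¹) := by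
        rw [← Subgroup.closure_toSubmonoid] at *
        exact hg
      rw [hSsymm, Set.union_self] at hg'
      have key : ∀ g ∈ Submonoid.closure S, ∀ w ∈ W, w * g ∈ W := by
        intro g hg
        induction hg using Submonoid.closure_induction with
        | mem x hx => exact fun w hw ↦ hTmul (Set.mul_mem_mul hw (hSsubT hx))
        | one => simpa
        | mul x y _ _ hx hy =>
          intro w hw
          rw [← mul_assoc]
          exact hy _ (hx w hw)
      simpa using key g hg' 1 h1W
    have hopen : IsOpen (Subgroup.closure S : Set G) :=
      Subgroup.isOpen_of_mem_nhds _ (Filter.mem_of_superset hSnhds Subgroup.subset_closure)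
    have hclosed : IsClosed (Subgroup.closure S : Set G) :=
      (Subgroup.closure S).isClosed_of_isOpen hopen
    exact hWc.of_isClosed_subset hclosed hsub

end Aux

/-- Let `G` be a t.d.l.c. group (Hausdorff, totally disconnected, locally compact
topological group). Then every compact subgroup `K` of `G` is contained in a
compact open subgroup of `G`. -/
theorem compact_subgroup_le_compact_open_subgroup
    {G : Type*} [Group G] [TopologicalSpace G] [IsTopologicalGroup G]
    [T2Space G] [TotallyDisconnectedSpace G] [LocallyCompactSpace G]
    (K : Subgroup G) (hK : IsCompact (K : Set G)) :
    ∃ U : Subgroup G, IsCompact (U : Set G) ∧ IsOpen (U : Set G) ∧ K ≤ U := by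
  -- Step 1: a compact open neighborhood of 1
  obtain ⟨C, hCnhds, -, hCc⟩ := local_compact_nhds (x := (1 : G)) (n := Set.univ) Filter.univ_mem
  obtain ⟨W, hWclopen, h1W, hWC⟩ :=
    (loc_compact_Haus_tot_disc_of_zero_dim (H := G)).mem_nhds_iff.mp hCnhds
  have hWc : IsCompact W := hCc.of_isClosed_subset hWclopen.isClosed hWC
  have hWo : IsOpen W := hWclopen.isOpen
  -- Step 2: van Dantzig
  obtain ⟨U₀, hU₀c, hU₀o, _⟩ := aux_exists_compactOpen_subgroup_subset hWc hWo h1W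
  -- Step 3: intersection of K-conjugates of U₀
  set L : Subgroup G :=
    { carrier := {g | ∀ k ∈ K, k⁻¹ * g * k ∈ U₀}
      one_mem' := fun k _ ↦ by simpa using U₀.one_mem
      mul_mem' := fun {a b} ha hb k hk ↦ by
        have : k⁻¹ * (a * b) * k = (k⁻¹ * a * k) * (k⁻¹ * b * k) := by group
        rw [this]
        exact U₀.mul_mem (ha k hk) (hb k hk)
      inv_mem' := fun {a} ha k hk ↦ by
        have : k⁻¹ * a⁻¹ * k = (k⁻¹ * a * k)⁻¹ := by group
        rw [this]
        exact U₀.inv_mem (ha k hk) } with hLdef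
  have hLmem : ∀ g : G, g ∈ L ↔ ∀ k ∈ K, k⁻¹ * g * k ∈ U₀ := fun g ↦ Iff.rfl
  -- L is open
  have hno : IsOpen {p : G × G | p.1⁻¹ * p.2 * p.1 ∈ (U₀ : Set G)} :=
    hU₀o.preimage (by continuity)
  have hsub : (K : Set G) ×ˢ ({1} : Set G) ⊆ {p : G × G | p.1⁻¹ * p.2 * p.1 ∈ (U₀ : Set G)} := by
    rintro ⟨k, g⟩ ⟨hk, hg⟩
    simp only [Set.mem_singleton_iff] at hg
    subst hg
    simpa using U₀.one_mem
  obtain ⟨u, v, huo, hvo, hKu, h1v, huv⟩ :=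
    generalized_tube_lemma hK isCompact_singleton hno hsub
  have hvL : v ⊆ (L : Set G) := by
    intro g hg k hk
    exact huv (Set.mk_mem_prod (hKu hk) hg)
  have hLo : IsOpen (L : Set G) :=
    Subgroup.isOpen_of_mem_nhds _ (Filter.mem_of_superset (hvo.mem_nhds (h1v rfl)) hvL)
  -- L ≤ U₀ hence compact
  have hLU₀ : (L : Set G) ⊆ (U₀ : Set G) := by
    intro g hg
    simpa using hg 1 K.one_mem
  have hLc : IsCompact (L : Set G) :=
    hU₀c.of_isClosed_subset (L.isClosed_of_isOpen hLo) hLU₀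
  -- K normalizes L
  have hnorm : ∀ k ∈ K, ∀ l ∈ L, k * l * k⁻¹ ∈ L := by
    intro k hk l hl k' hk'
    have : k'⁻¹ * (k * l * k⁻¹) * k' = (k⁻¹ * k')⁻¹ * l * (k⁻¹ * k') := by group
    rw [this]
    exact hl _ (K.mul_mem (K.inv_mem hk) hk')
  -- Step 4: U := K * L
  refine ⟨{ carrier := (K : Set G) * (L : Set G)
            one_mem' := ⟨1, K.one_mem, 1, L.one_mem, by simp⟩
            mul_mem' := ?_
            inv_mem' := ?_ }, ?_, ?_, ?_⟩
  · rintro a b ⟨k₁, hk₁, l₁, hl₁, rfl⟩ ⟨k₂, hk₂, l₂, hl₂, rfl⟩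
    have h := hnorm k₂⁻¹ (K.inv_mem hk₂) l₁ hl₁
    rw [inv_inv] at h
    exact ⟨k₁ * k₂, K.mul_mem hk₁ hk₂, (k₂⁻¹ * l₁ * k₂) * l₂,
      L.mul_mem h hl₂, by group⟩
  · rintro a ⟨k, hk, l, hl, rfl⟩
    exact ⟨k⁻¹, K.inv_mem hk, k * l⁻¹ * k⁻¹, hnorm k hk l⁻¹ (L.inv_mem hl), by group⟩
  · exact hK.mul hLc
  · exact hLo.mul_left
  · intro k hk
    exact ⟨k, hk, 1, L.one_mem, by simp⟩
end

section
/- Let G be a t.d.l.c. group and K a compact subgroup of G. Then the quotient group N_G(K)/K of the normalizer of K by K, equipped with the quotient topology coming from the subspace topology on N_G(K), is again a t.d.l.c. group, i.e., it is Hausdorff, locally compact and totally disconnected. -/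
open Set Pointwise

/-- The normalizer of a closed subgroup is closed. -/
theorem aux_isClosed_normalizer {G : Type*} [Group G] [TopologicalSpace G] [IsTopologicalGroup G]
    (K : Subgroup G) (hK : IsClosed (K : Set G)) : IsClosed ((Subgroup.normalizer (K : Set G)) : Set G) := by
  have hEq : ((Subgroup.normalizer (K : Set G)) : Set G) =
      (⋂ k ∈ (K : Set G), (fun g => g * k * g⁻¹) ⁻¹' (K : Set G)) ∩
      (⋂ k ∈ (K : Set G), (fun g => g⁻¹ * k * g) ⁻¹' (K : Set G)) := by
    ext g
    simp only [Set.mem_inter_iff, Set.mem_iInter, Set.mem_preimage, SetLike.mem_coe,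
      Subgroup.mem_normalizer_iff]
    constructor
    · intro h
      refine ⟨fun k hk => (h k).1 hk, fun k hk => ?_⟩
      have hk' : g * (g⁻¹ * k * g) * g⁻¹ = k := by group
      exact (h (g⁻¹ * k * g)).2 (by rw [hk']; exact hk)
    · rintro ⟨h1, h2⟩ n
      constructor
      · exact h1 n
      · intro hn
        have := h2 _ hn
        have hn' : g⁻¹ * (g * n * g⁻¹) * g = n := by group
        rwa [hn'] at this
  rw [hEq]
  refine IsClosed.inter ?_ ?_ <;>
    refine isClosed_biInter fun k _ => IsClosed.preimage ?_ hK
  · exact ((continuous_id.mul continuous_const).mul continuous_inv)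
  · exact ((continuous_inv.mul continuous_const).mul continuous_id)

/-- van Dantzig (open subgroup part): in a locally compact, Hausdorff, totally disconnected
group, every open neighbourhood of the identity contains an open subgroup. -/
theorem aux_exists_openSubgroup {H : Type*} [Group H] [TopologicalSpace H] [IsTopologicalGroup H]
    [T2Space H] [LocallyCompactSpace H] [TotallyDisconnectedSpace H]
    {U : Set H} (hU : IsOpen U) (h1 : (1 : H) ∈ U) :
    ∃ V : Subgroup H, IsOpen (V : Set H) ∧ (V : Set H) ⊆ U := by
  obtain ⟨s, hs_comp, h1s, hsU⟩ := exists_compact_subset hU h1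
  obtain ⟨C, hC_clopen, h1C, hCs⟩ :=
    loc_compact_Haus_tot_disc_of_zero_dim.exists_subset_of_mem_open h1s isOpen_interior
  have hC_clopen' : IsClopen C := hC_clopen
  have hC_comp : IsCompact C :=
    hs_comp.of_isClosed_subset hC_clopen'.isClosed (hCs.trans interior_subset)
  obtain ⟨W', hW'1, hCW'⟩ :=
    compact_open_separated_mul_right hC_comp hC_clopen'.isOpen subset_rfl
  obtain ⟨Wo, hWoW', hWo_open, h1Wo⟩ := mem_nhds_iff.1 hW'1
  set S : Set H := Wo ∩ Wo⁻¹ with hS_def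
  have hS_open : IsOpen S := hWo_open.inter hWo_open.inv
  have h1S : (1 : H) ∈ S := ⟨h1Wo, by simpa using h1Wo⟩
  have hS_symm : S⁻¹ = S := by
    rw [hS_def, Set.inter_inv, inv_inv, Set.inter_comm]
  have hSW' : S ⊆ W' := fun x hx => hWoW' hx.1
  have hpow : ∀ n : ℕ, S ^ (n + 1) ⊆ C := by
    intro n
    induction n with
    | zero =>
      intro w hw
      rw [pow_one] at hw
      have : (1 : H) * w ∈ C := hCW' (Set.mul_mem_mul h1C (hSW' hw))
      simpa using this
    | succ n ih =>
      intro w hw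
      rw [pow_succ] at hw
      exact hCW' ((Set.mul_subset_mul ih hSW') hw)
  refine ⟨{
    carrier := ⋃ n : ℕ, S ^ (n + 1)
    one_mem' := Set.mem_iUnion.2 ⟨0, by simpa using h1S⟩
    mul_mem' := by
      intro a b ha hb
      obtain ⟨m, hm⟩ := Set.mem_iUnion.1 ha
      obtain ⟨n, hn⟩ := Set.mem_iUnion.1 hb
      refine Set.mem_iUnion.2 ⟨m + n + 1, ?_⟩
      have : m + n + 1 + 1 = (m + 1) + (n + 1) := by ring
      rw [this, pow_add]
      exact Set.mul_mem_mul hm hn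
    inv_mem' := by
      intro a ha
      obtain ⟨n, hn⟩ := Set.mem_iUnion.1 ha
      refine Set.mem_iUnion.2 ⟨n, ?_⟩
      have : a⁻¹ ∈ (S ^ (n + 1))⁻¹ := Set.inv_mem_inv.2 hn
      rwa [← inv_pow, hS_symm] at this }, ?_, ?_⟩
  · apply Subgroup.isOpen_of_mem_nhds
    exact Filter.mem_of_superset (hS_open.mem_nhds h1S)
      (by intro x hx; exact Set.mem_iUnion.2 ⟨0, by simpa using hx⟩)
  · intro x hx
    obtain ⟨n, hn⟩ := Set.mem_iUnion.1 hx
    exact hsU (interior_subset (hCs (hpow n hn)))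

/-- A T1 topological group with a neighbourhood basis of open subgroups at the identity
is totally disconnected. -/
theorem aux_td_of_openSubgroup_basis {Q : Type*} [Group Q] [TopologicalSpace Q]
    [IsTopologicalGroup Q] [T1Space Q]
    (h : ∀ U : Set Q, IsOpen U → (1 : Q) ∈ U →
      ∃ V : Subgroup Q, IsOpen (V : Set Q) ∧ (V : Set Q) ⊆ U) :
    TotallyDisconnectedSpace Q := by
  rw [totallyDisconnectedSpace_iff_connectedComponent_singleton]
  intro x
  refine Set.eq_singleton_iff_unique_mem.2 ⟨mem_connectedComponent, fun y hy => ?_⟩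
  by_contra hxy
  have hne : x * (1 : Q) ≠ y := by simpa using fun h' => hxy h'.symm
  obtain ⟨V, hVo, hVs⟩ := h {z : Q | x * z ≠ y}
    (isOpen_compl_singleton.preimage (continuous_const.mul continuous_id)) hne
  have hVc : IsClosed (V : Set Q) := V.isClosed_of_isOpen hVo
  have hclopen : IsClopen ((x * ·) '' (V : Set Q)) :=
    ⟨(Homeomorph.mulLeft x).isClosedMap _ hVc, (Homeomorph.mulLeft x).isOpenMap _ hVo⟩
  have hxmem : x ∈ (x * ·) '' (V : Set Q) := ⟨1, V.one_mem, mul_one x⟩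
  have hsub : connectedComponent x ⊆ (x * ·) '' (V : Set Q) :=
    hclopen.connectedComponent_subset hxmem
  obtain ⟨v, hv, hvx⟩ := hsub hy
  exact hVs hv hvx

/-- Let `G` be a t.d.l.c. group and `K` a compact subgroup of `G`. Then the
quotient group `N_G(K)/K`, equipped with the quotient topology coming from the
subspace topology on `N_G(K)`, is again a t.d.l.c. group: it is Hausdorff, locally
compact and totally disconnected. -/
theorem weyl_group_tdlc
    {G : Type*} [Group G] [TopologicalSpace G] [IsTopologicalGroup G]
    [T2Space G] [TotallyDisconnectedSpace G] [LocallyCompactSpace G]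
    (K : Subgroup G) (hK : IsCompact (K : Set G)) :
    T2Space (Subgroup.normalizer (K : Set G) ⧸ K.subgroupOf (Subgroup.normalizer (K : Set G))) ∧
    LocallyCompactSpace (Subgroup.normalizer (K : Set G) ⧸ K.subgroupOf (Subgroup.normalizer (K : Set G))) ∧
    TotallyDisconnectedSpace (Subgroup.normalizer (K : Set G) ⧸ K.subgroupOf (Subgroup.normalizer (K : Set G))) := by
  have hKcl : IsClosed (K : Set G) := hK.isClosed
  have hNcl : IsClosed ((Subgroup.normalizer (K : Set G)) : Set G) := aux_isClosed_normalizer K hKcl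
  haveI : LocallyCompactSpace (Subgroup.normalizer (K : Set G)) := hNcl.locallyCompactSpace
  haveI : IsClosed ((K.subgroupOf (Subgroup.normalizer (K : Set G)) : Subgroup (Subgroup.normalizer (K : Set G))) : Set (Subgroup.normalizer (K : Set G))) := by
    have : ((K.subgroupOf (Subgroup.normalizer (K : Set G)) : Subgroup (Subgroup.normalizer (K : Set G))) : Set (Subgroup.normalizer (K : Set G))) =
        ((↑) : (Subgroup.normalizer (K : Set G)) → G) ⁻¹' (K : Set G) := rfl
    rw [this]
    exact hKcl.preimage continuous_subtype_val
  haveI hT2 : T2Space ((Subgroup.normalizer (K : Set G)) ⧸ K.subgroupOf (Subgroup.normalizer (K : Set G))) := inferInstance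
  refine ⟨hT2, inferInstance, ?_⟩
  apply aux_td_of_openSubgroup_basis
  intro U hU h1U
  have hpre : IsOpen ((QuotientGroup.mk : (Subgroup.normalizer (K : Set G)) → _) ⁻¹' U) :=
    hU.preimage continuous_quot_mk
  have h1pre : (1 : (Subgroup.normalizer (K : Set G))) ∈ (QuotientGroup.mk : (Subgroup.normalizer (K : Set G)) → _) ⁻¹' U := h1U
  obtain ⟨V, hVo, hVs⟩ := aux_exists_openSubgroup hpre h1pre
  refine ⟨Subgroup.map (QuotientGroup.mk' (K.subgroupOf (Subgroup.normalizer (K : Set G)))) V, ?_, ?_⟩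
  · rw [Subgroup.coe_map]
    exact QuotientGroup.isOpenMap_coe _ hVo
  · intro q hq
    obtain ⟨v, hv, rfl⟩ := hq
    exact hVs hv
end
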